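/- For a finite deterministic Markov decision process, greedy policy extraction from the optimal value function is optimal: if a policy π : S → A satisfies g(x, π(x)) + λ · v_*(f(x, π(x))) = min_{u ∈ A} [ g(x, u) + λ · v_*(f(x, u)) ] for every x ∈ S, then v_π(x) = v_*(x) for every x ∈ S. -/

import Mathlib

/-- Closed-loop trajectory under a stationary policy. -/
def ctraj {S A : Type*} (f : S → A → S) (pol : S → A) (x : S) : ℕ → S
  | 0 => x
  | t + 1 => f (ctraj f pol x t) (pol (ctraj f pol x t))

/-- Value function of a stationary policy. -/
noncomputable def vpi {S A : Type*} (f : S → A → S) (g : S → A → ℝ) (lam : ℝ)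
    (pol : S → A) (x : S) : ℝ :=
  ∑' t : ℕ, lam ^ t * g (ctraj f pol x t) (pol (ctraj f pol x t))
/-- Optimal value function: minimum over stationary policies. -/
noncomputable def vstar {S A : Type*} (f : S → A → S) (g : S → A → ℝ) (lam : ℝ)
    (x : S) : ℝ :=
  ⨅ pol : S → A, vpi f g lam pol x

lemma ctraj_shift {S A : Type*} (f : S → A → S) (pol : S → A) (x : S) :
    ∀ t, ctraj f pol x (t + 1) = ctraj f pol (f x (pol x)) t := by
  intro t
  induction t with
  | zero => rfl
  | succ t ih => show f (ctraj f pol x (t+1)) _ = _; rw [ih]; rfl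

lemma vpi_summable {S A : Type*} (f : S → A → S) (g : S → A → ℝ) (lam : ℝ)
    (hlam0 : 0 < lam) (hlam1 : lam < 1) (M : ℝ) (hM : ∀ x a, |g x a| ≤ M)
    (pol : S → A) (x : S) :
    Summable (fun t : ℕ => lam ^ t * g (ctraj f pol x t) (pol (ctraj f pol x t))) := by
  apply Summable.of_norm_bounded (g := fun t : ℕ => lam ^ t * M)
    ((summable_geometric_of_lt_one hlam0.le hlam1).mul_right M)
  intro t
  rw [Real.norm_eq_abs, abs_mul, abs_pow, abs_of_pos hlam0]
  exact mul_le_mul_of_nonneg_left (hM _ _) (pow_nonneg hlam0.le t)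

lemma vpi_rec {S A : Type*} (f : S → A → S) (g : S → A → ℝ) (lam : ℝ)
    (hlam0 : 0 < lam) (hlam1 : lam < 1) (M : ℝ) (hM : ∀ x a, |g x a| ≤ M)
    (pol : S → A) (x : S) :
    vpi f g lam pol x = g x (pol x) + lam * vpi f g lam pol (f x (pol x)) := by
  unfold vpi
  rw [Summable.tsum_eq_zero_add (vpi_summable f g lam hlam0 hlam1 M hM pol x)]
  simp only [pow_zero, one_mul]
  show g x (pol x) + _ = _
  simp only [ctraj_shift]
  rw [← tsum_mul_left]
  congr 1
  exact tsum_congr (fun t => by ring)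

lemma fin_ciInf_exists_min {A : Type*} [Finite A] [Nonempty A] (φ : A → ℝ) :
    ∃ u, (⨅ v, φ v) = φ u ∧ ∀ v, φ u ≤ φ v := by
  obtain ⟨u, hu⟩ := Finite.exists_min φ
  exact ⟨u, le_antisymm (ciInf_le (Set.finite_range φ).bddBelow u) (le_ciInf hu), hu⟩

lemma fin_ciInf_le {A : Type*} [Finite A] [Nonempty A] (φ : A → ℝ) (u : A) :
    (⨅ v, φ v) ≤ φ u := ciInf_le (Set.finite_range φ).bddBelow u

lemma abs_ciInf_sub_ciInf {A : Type*} [Finite A] [Nonempty A] (φ ψ : A → ℝ) (c : ℝ)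
    (h : ∀ u, |φ u - ψ u| ≤ c) : |(⨅ u, φ u) - ⨅ u, ψ u| ≤ c := by
  rw [abs_sub_le_iff]
  obtain ⟨u₁, hu₁, _⟩ := fin_ciInf_exists_min ψ
  obtain ⟨u₂, hu₂, _⟩ := fin_ciInf_exists_min φ
  constructor
  · have := fin_ciInf_le φ u₁
    have h1 := abs_le.mp (h u₁)
    rw [hu₁]; linarith
  · have := fin_ciInf_le ψ u₂
    have h2 := abs_le.mp (h u₂)
    rw [hu₂]; linarith

/-- Comparison: subsolution ≤ supersolution for a fixed policy. -/
lemma comp_le {S A : Type*} [Fintype S] [Nonempty S]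
    (f : S → A → S) (g : S → A → ℝ) (lam : ℝ) (hlam0 : 0 < lam) (hlam1 : lam < 1)
    (π : S → A) (v w : S → ℝ)
    (hv : ∀ x, v x ≤ g x (π x) + lam * v (f x (π x)))
    (hw : ∀ x, g x (π x) + lam * w (f x (π x)) ≤ w x) :
    ∀ x, v x ≤ w x := by
  obtain ⟨x₀, hx₀⟩ := Finite.exists_max (fun x => v x - w x)
  have key : v x₀ - w x₀ ≤ 0 := by
    have h1 : v x₀ - w x₀ ≤ lam * (v (f x₀ (π x₀)) - w (f x₀ (π x₀))) := by
      have := hv x₀; have := hw x₀; linarith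
    have h2 : v (f x₀ (π x₀)) - w (f x₀ (π x₀)) ≤ v x₀ - w x₀ := hx₀ _
    nlinarith
  intro x
  have := hx₀ x
  linarith

theorem greedy_policy_is_optimal
    {S A : Type*} [Fintype S] [Nonempty S] [Fintype A] [Nonempty A]
    (f : S → A → S) (g : S → A → ℝ) (lam : ℝ) (hlam0 : 0 < lam) (hlam1 : lam < 1)
    (pol : S → A)
    (hgreedy : ∀ x : S,
      g x (pol x) + lam * vstar f g lam (f x (pol x)) =
        ⨅ u : A, (g x u + lam * vstar f g lam (f x u))) :
    ∀ x : S, vpi f g lam pol x = vstar f g lam x := by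
  -- bound on stage costs
  obtain ⟨⟨xM, aM⟩, hMp⟩ := Finite.exists_max (fun p : S × A => |g p.1 p.2|)
  set M : ℝ := |g xM aM| with hMdef
  have hM : ∀ x a, |g x a| ≤ M := fun x a => hMp (x, a)
  have hrec := vpi_rec f g lam hlam0 hlam1 M hM
  -- Bellman operator and its fixed point
  set T : (S → ℝ) → (S → ℝ) := fun v x => ⨅ u : A, (g x u + lam * v (f x u)) with hT
  have hcontr : ContractingWith ⟨lam, hlam0.le⟩ T := by
    constructor
    · exact_mod_cast hlam1
    · apply LipschitzWith.of_dist_le_mul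
      intro v w
      show dist (T v) (T w) ≤ lam * dist v w
      rw [dist_pi_le_iff (mul_nonneg hlam0.le dist_nonneg)]
      intro x
      rw [Real.dist_eq]
      apply abs_ciInf_sub_ciInf
      intro u
      have hd : dist (v (f x u)) (w (f x u)) ≤ dist v w := dist_le_pi_dist v w (f x u)
      rw [Real.dist_eq] at hd
      have : (g x u + lam * v (f x u)) - (g x u + lam * w (f x u))
          = lam * (v (f x u) - w (f x u)) := by ring
      rw [this, abs_mul, abs_of_pos hlam0]
      exact mul_le_mul_of_nonneg_left hd hlam0.le
  set vd : S → ℝ := ContractingWith.fixedPoint T hcontr with hvd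
  have hfix : ∀ x, (⨅ u : A, (g x u + lam * vd (f x u))) = vd x := by
    intro x
    exact congrFun (hcontr.fixedPoint_isFixedPt) x
  -- greedy policy wrt vd
  choose pis hpis hminp using
    fun x : S => fin_ciInf_exists_min (fun u : A => g x u + lam * vd (f x u))
  have hstar : ∀ x, vd x = g x (pis x) + lam * vd (f x (pis x)) := by
    intro x; rw [← hfix x]; exact hpis x
  have hminv : ∀ x u, vd x ≤ g x u + lam * vd (f x u) := by
    intro x u; rw [← hfix x]; exact fin_ciInf_le _ u
  -- every policy value dominates vd
  have hge : ∀ (π : S → A) (x : S), vd x ≤ vpi f g lam π x := fun π =>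
    comp_le f g lam hlam0 hlam1 π vd (vpi f g lam π)
      (fun x => hminv x (π x)) (fun x => (hrec π x).ge)
  -- the greedy-wrt-vd policy achieves vd
  have heq : ∀ x, vpi f g lam pis x = vd x := fun x =>
    le_antisymm
      (comp_le f g lam hlam0 hlam1 pis (vpi f g lam pis) vd
        (fun y => (hrec pis y).le) (fun y => (hstar y).ge) x)
      (hge pis x)
  -- hence vstar = vd
  have hvstar : ∀ x, vstar f g lam x = vd x := by
    intro x
    refine le_antisymm ?_ (le_ciInf fun π => hge π x)
    exact (ciInf_le (Set.finite_range _).bddBelow pis).trans (heq x).le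
  -- transfer the greedy hypothesis to vd
  have hg2 : ∀ x, g x (pol x) + lam * vd (f x (pol x)) = vd x := by
    intro x
    have h := hgreedy x
    simp only [hvstar] at h
    rw [h]
    exact hfix x
  intro x
  rw [hvstar]
  exact le_antisymm
    (comp_le f g lam hlam0 hlam1 pol (vpi f g lam pol) vd
      (fun y => (hrec pol y).le) (fun y => (hg2 y).le) x)
    (comp_le f g lam hlam0 hlam1 pol vd (vpi f g lam pol)
      (fun y => (hg2 y).ge) (fun y => (hrec pol y).ge) x)
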